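/- Let T be a set of permutation patterns of arbitrary lengths. Then for every n: (a) ⟨S_n(T)⟩ = ⟨S_n(T^{-1})⟩ = ⟨S_n(T) ∪ S_n(T^{-1})⟩ as subgroups of S_n; (b) ⟨S_n(T^{rc})⟩ is the conjugate of ⟨S_n(T)⟩ by the decreasing permutation ψ_n, hence ⟨S_n(T)⟩ and ⟨S_n(T^{rc})⟩ are isomorphic groups. -/

import Mathlib

/-- A permutation `π ∈ S_n` contains the pattern `τ ∈ S_k` if there is a strictly
increasing `f : Fin k → Fin n` such that `τ a < τ b ↔ π (f a) < π (f b)`. -/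
def PermContains {k n : ℕ} (τ : Equiv.Perm (Fin k)) (π : Equiv.Perm (Fin n)) : Prop :=
  ∃ f : Fin k → Fin n, StrictMono f ∧ ∀ a b : Fin k, τ a < τ b ↔ π (f a) < π (f b)

/-- `avoidSet n T` is `S_n(T)`: the permutations of `Fin n` avoiding every pattern in `T`,
where `T` is a set of permutations of arbitrary lengths. -/
def avoidSet (n : ℕ) (T : Set (Σ k : ℕ, Equiv.Perm (Fin k))) : Set (Equiv.Perm (Fin n)) :=
  {π | ∀ τ ∈ T, ¬ PermContains τ.2 π}
/-- `T⁻¹ = {τ⁻¹ : τ ∈ T}`. -/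
def invSet (T : Set (Σ k : ℕ, Equiv.Perm (Fin k))) : Set (Σ k : ℕ, Equiv.Perm (Fin k)) :=
  (fun τ => (⟨τ.1, τ.2⁻¹⟩ : Σ k : ℕ, Equiv.Perm (Fin k))) '' T

/-- `T^{rc} = {ψ ∘ τ ∘ ψ : τ ∈ T}`, the reverse-complement. -/
def rcSet (T : Set (Σ k : ℕ, Equiv.Perm (Fin k))) : Set (Σ k : ℕ, Equiv.Perm (Fin k)) :=
  (fun τ => (⟨τ.1, Fin.revPerm * τ.2 * Fin.revPerm⟩ : Σ k : ℕ, Equiv.Perm (Fin k))) '' T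

lemma permContains_inv {k n : ℕ} {τ : Equiv.Perm (Fin k)} {π : Equiv.Perm (Fin n)}
    (h : PermContains τ π) : PermContains τ⁻¹ π⁻¹ := by
  obtain ⟨f, hf, hc⟩ := h
  refine ⟨fun a => π (f (τ⁻¹ a)), fun a b hab => ?_, fun a b => ?_⟩
  · exact (hc _ _).mp (by simpa using hab)
  · simp only [Equiv.Perm.inv_def, Equiv.symm_apply_apply]
    exact (hf.lt_iff_lt).symm

lemma permContains_inv_iff {k n : ℕ} {τ : Equiv.Perm (Fin k)} {π : Equiv.Perm (Fin n)} :
    PermContains τ⁻¹ π⁻¹ ↔ PermContains τ π :=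
  ⟨fun h => by simpa using permContains_inv h, permContains_inv⟩

lemma permContains_rc {k n : ℕ} {τ : Equiv.Perm (Fin k)} {π : Equiv.Perm (Fin n)}
    (h : PermContains τ π) :
    PermContains (Fin.revPerm * τ * Fin.revPerm) (Fin.revPerm * π * Fin.revPerm) := by
  obtain ⟨f, hf, hc⟩ := h
  refine ⟨fun a => Fin.revPerm (f (Fin.revPerm a)), fun a b hab => ?_, fun a b => ?_⟩
  · simp only [Fin.revPerm_apply, Fin.rev_lt_rev]
    exact hf (by simpa [Fin.rev_lt_rev] using hab)
  · simp only [Equiv.Perm.mul_apply, Fin.revPerm_apply, Fin.rev_rev, Fin.rev_lt_rev]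
    exact hc _ _

lemma rev_conj_conj {m : ℕ} (σ : Equiv.Perm (Fin m)) :
    Fin.revPerm * (Fin.revPerm * σ * Fin.revPerm) * Fin.revPerm = σ := by
  ext x
  simp [Equiv.Perm.mul_apply]

lemma permContains_rc_iff {k n : ℕ} {τ : Equiv.Perm (Fin k)} {π : Equiv.Perm (Fin n)} :
    PermContains (Fin.revPerm * τ * Fin.revPerm) (Fin.revPerm * π * Fin.revPerm) ↔
      PermContains τ π := by
  refine ⟨fun h => ?_, permContains_rc⟩
  have := permContains_rc h
  rwa [rev_conj_conj, rev_conj_conj] at this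

lemma avoid_invSet (T : Set (Σ k : ℕ, Equiv.Perm (Fin k))) (n : ℕ) :
    avoidSet n (invSet T) = (avoidSet n T)⁻¹ := by
  ext π
  simp only [avoidSet, invSet, Set.mem_setOf_eq, Set.mem_inv]
  constructor
  · intro h τ hτ hcon
    exact h ⟨τ.1, τ.2⁻¹⟩ ⟨τ, hτ, rfl⟩ (by simpa using permContains_inv hcon)
  · rintro h σ ⟨τ, hτ, rfl⟩ hcon
    exact h τ hτ (by simpa using permContains_inv hcon)

lemma revPerm_inv (n : ℕ) : (Fin.revPerm : Equiv.Perm (Fin n))⁻¹ = Fin.revPerm := by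
  rw [inv_eq_iff_mul_eq_one]
  ext x
  simp [Equiv.Perm.mul_apply]

lemma avoid_rcSet (T : Set (Σ k : ℕ, Equiv.Perm (Fin k))) (n : ℕ) :
    avoidSet n (rcSet T) =
      (fun x => Fin.revPerm * x * Fin.revPerm) '' avoidSet n T := by
  ext π
  simp only [avoidSet, rcSet, Set.mem_setOf_eq, Set.mem_image]
  constructor
  · intro h
    refine ⟨Fin.revPerm * π * Fin.revPerm, fun τ hτ hcon => ?_, rev_conj_conj π⟩
    exact h ⟨τ.1, Fin.revPerm * τ.2 * Fin.revPerm⟩ ⟨τ, hτ, rfl⟩ (by simpa [rev_conj_conj] using permContains_rc hcon)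
  · rintro ⟨σ, hσ, rfl⟩ σ' ⟨τ, hτ, rfl⟩ hcon
    exact hσ τ hτ (permContains_rc_iff.mp hcon)

theorem closure_avoid_inv_and_rc (T : Set (Σ k : ℕ, Equiv.Perm (Fin k))) (n : ℕ) :
    Subgroup.closure (avoidSet n (invSet T)) = Subgroup.closure (avoidSet n T) ∧
    Subgroup.closure (avoidSet n T ∪ avoidSet n (invSet T)) =
      Subgroup.closure (avoidSet n T) ∧
    Subgroup.closure (avoidSet n (rcSet T)) =
      Subgroup.map (MulAut.conj (Fin.revPerm : Equiv.Perm (Fin n))).toMonoidHom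
        (Subgroup.closure (avoidSet n T)) ∧
    Nonempty (Subgroup.closure (avoidSet n T) ≃* Subgroup.closure (avoidSet n (rcSet T))) := by
  have e1 : Subgroup.closure (avoidSet n (invSet T)) = Subgroup.closure (avoidSet n T) := by
    rw [avoid_invSet, Subgroup.closure_inv]
  have hfun : ⇑(MulAut.conj (Fin.revPerm : Equiv.Perm (Fin n))).toMonoidHom =
      fun x => Fin.revPerm * x * Fin.revPerm := by
    funext x
    simp [MulAut.conj_apply, revPerm_inv]
  have e3 : Subgroup.closure (avoidSet n (rcSet T)) =
      Subgroup.map (MulAut.conj (Fin.revPerm : Equiv.Perm (Fin n))).toMonoidHom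
        (Subgroup.closure (avoidSet n T)) := by
    rw [avoid_rcSet, MonoidHom.map_closure, hfun]
  refine ⟨e1, ?_, e3, ?_⟩
  · rw [Subgroup.closure_union, e1, sup_idem]
  · exact ⟨((MulAut.conj (Fin.revPerm : Equiv.Perm (Fin n))).subgroupMap
      (Subgroup.closure (avoidSet n T))).trans (MulEquiv.subgroupCongr e3.symm)⟩
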